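/- arXiv:1305.0087 — 2 statements merged into one kernel-verified Lean document; each statement's English description precedes it below -/
import Mathlib

section
/- Let Z_γ be a γ-net of the set Z = {z ∈ V : ‖z‖₁ ≤ 1} for a linear subspace V of ℝ^n, let τ ∈ [1/2, 1) and ε ∈ (0, 1/2). Suppose S is a diagonal nonnegative matrix such that (i) |ρ_τ(S z_γ) − ρ_τ(z_γ)| ≤ (ε/3)ρ_τ(z_γ) for every z_γ ∈ Z_γ, and (ii) (1/3)‖v‖₁ ≤ ‖Sv‖₁ ≤ (5/3)‖v‖₁ for every v ∈ V. If γ = ((1−τ)/(6τ))·ε, then for every z ∈ V with ‖z‖₁ = 1, |ρ_τ(Sz) − ρ_τ(z)| ≤ ε·ρ_τ(z). -/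
open Matrix MeasureTheory ProbabilityTheory BigOperators

noncomputable def rho (τ z : ℝ) : ℝ := if 0 ≤ z then τ * z else (τ - 1) * z

noncomputable def rhoV (τ : ℝ) {n : ℕ} (x : Fin n → ℝ) : ℝ := ∑ i, rho τ (x i)

noncomputable def l1 {n : ℕ} (x : Fin n → ℝ) : ℝ := ∑ i, |x i|

noncomputable def linf {n : ℕ} (x : Fin n → ℝ) : ℝ := ⨆ i, |x i|

noncomputable def l2 {n : ℕ} (x : Fin n → ℝ) : ℝ := Real.sqrt (∑ i, (x i)^2)

noncomputable def l1M {n d : ℕ} (U : Matrix (Fin n) (Fin d) ℝ) : ℝ := ∑ i, ∑ j, |U i j|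

lemma rho_lip {τ x y : ℝ} (h1 : 1/2 ≤ τ) (h2 : τ < 1) :
    |rho τ x - rho τ y| ≤ τ * |x - y| := by
  unfold rho
  rcases abs_cases (x - y) with ⟨he, _⟩ | ⟨he, _⟩ <;>
    split_ifs <;> rw [abs_le] <;> constructor <;> nlinarith

lemma rho_lb {τ x : ℝ} (h1 : 1/2 ≤ τ) (h2 : τ < 1) :
    (1 - τ) * |x| ≤ rho τ x := by
  unfold rho
  rcases abs_cases x with ⟨he, _⟩ | ⟨he, _⟩ <;> split_ifs <;> nlinarith

lemma rhoV_lip {τ : ℝ} {n : ℕ} (x y : Fin n → ℝ) (h1 : 1/2 ≤ τ) (h2 : τ < 1) :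
    |rhoV τ x - rhoV τ y| ≤ τ * l1 (x - y) := by
  unfold rhoV l1
  rw [← Finset.sum_sub_distrib, Finset.mul_sum]
  refine (Finset.abs_sum_le_sum_abs _ _).trans (Finset.sum_le_sum fun i _ => ?_)
  simpa using rho_lip (x := x i) (y := y i) h1 h2

lemma rhoV_lb {τ : ℝ} {n : ℕ} (x : Fin n → ℝ) (h1 : 1/2 ≤ τ) (h2 : τ < 1) :
    (1 - τ) * l1 x ≤ rhoV τ x := by
  unfold rhoV l1
  rw [Finset.mul_sum]
  exact Finset.sum_le_sum fun i _ => rho_lb h1 h2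

theorem net_argument {n : ℕ} (V : Submodule ℝ (Fin n → ℝ)) (Zγ : Set (Fin n → ℝ))
    (τ ε γ : ℝ) (hτ : 1/2 ≤ τ ∧ τ < 1) (hε : 0 < ε ∧ ε < 1/2)
    (hγ : γ = ((1 - τ) / (6 * τ)) * ε)
    (hZγsub : Zγ ⊆ {z | z ∈ V ∧ l1 z ≤ 1})
    (hnet : ∀ z, z ∈ V → l1 z ≤ 1 → ∃ zγ ∈ Zγ, l1 (z - zγ) ≤ γ)
    (f : Fin n → ℝ) (hf : ∀ i, 0 ≤ f i)
    (hnetbd : ∀ zγ ∈ Zγ,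
      |rhoV τ ((Matrix.diagonal f).mulVec zγ) - rhoV τ zγ| ≤ (ε/3) * rhoV τ zγ)
    (hl1dist : ∀ v ∈ V, (1/3) * l1 v ≤ l1 ((Matrix.diagonal f).mulVec v) ∧
      l1 ((Matrix.diagonal f).mulVec v) ≤ (5/3) * l1 v)
    (z : Fin n → ℝ) (hz : z ∈ V) (hz1 : l1 z = 1) :
    |rhoV τ ((Matrix.diagonal f).mulVec z) - rhoV τ z| ≤ ε * rhoV τ z := by
  obtain ⟨hτ1, hτ2⟩ := hτ
  obtain ⟨hε1, hε2⟩ := hε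
  have hτ0 : 0 < τ := by linarith
  have hγ0 : 0 ≤ γ := by
    rw [hγ]
    exact mul_nonneg (div_nonneg (by linarith) (by linarith)) hε1.le
  obtain ⟨zγ, hzγZ, hzγd⟩ := hnet z hz hz1.le
  have hzγV : zγ ∈ V := (hZγsub hzγZ).1
  have hsubV : z - zγ ∈ V := V.sub_mem hz hzγV
  set S := Matrix.diagonal f
  -- bound on l1 of S(z - zγ)
  have hl1S : l1 (S.mulVec z - S.mulVec zγ) ≤ (5/3) * γ := by
    rw [← Matrix.mulVec_sub]
    refine (hl1dist _ hsubV).2.trans ?_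
    linarith
  have h1 : |rhoV τ (S.mulVec z) - rhoV τ (S.mulVec zγ)| ≤ τ * ((5/3) * γ) := by
    refine (rhoV_lip _ _ hτ1 hτ2).trans ?_
    exact mul_le_mul_of_nonneg_left hl1S hτ0.le
  have h2 := hnetbd zγ hzγZ
  have h3 : |rhoV τ zγ - rhoV τ z| ≤ τ * γ := by
    have := rhoV_lip zγ z hτ1 hτ2
    refine this.trans (mul_le_mul_of_nonneg_left ?_ hτ0.le)
    have : l1 (zγ - z) = l1 (z - zγ) := by
      unfold l1; congr 1; ext i; simp [abs_sub_comm]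
    linarith [this ▸ hzγd]
  have h5 : (1 - τ) ≤ rhoV τ z := by
    have := rhoV_lb z hτ1 hτ2
    rw [hz1] at this; linarith
  have h6 : τ * γ = (1 - τ) * ε / 6 := by
    rw [hγ]; field_simp
  have habs1 := abs_sub_abs_le_abs_sub (rhoV τ (S.mulVec z) - rhoV τ z) 0
  have key : |rhoV τ (S.mulVec z) - rhoV τ z| ≤
      |rhoV τ (S.mulVec z) - rhoV τ (S.mulVec zγ)| +
      |rhoV τ (S.mulVec zγ) - rhoV τ zγ| + |rhoV τ zγ - rhoV τ z| := by
    have := abs_add_le (rhoV τ (S.mulVec z) - rhoV τ (S.mulVec zγ))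
      (rhoV τ (S.mulVec zγ) - rhoV τ zγ)
    have h' := abs_add_le (rhoV τ (S.mulVec z) - rhoV τ zγ) (rhoV τ zγ - rhoV τ z)
    simp only [sub_add_sub_cancel] at this h'
    linarith
  have h4 : rhoV τ zγ ≤ rhoV τ z + τ * γ := by
    have := abs_le.mp h3; linarith
  have hzγnonneg : 0 ≤ rhoV τ zγ := by
    have := rhoV_lb zγ hτ1 hτ2
    have hl10 : 0 ≤ l1 zγ := Finset.sum_nonneg fun i _ => abs_nonneg _
    nlinarith
  -- τγ ≤ ε/6 * rhoV τ z
  have hτγ : τ * γ ≤ ε / 6 * rhoV τ z := by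
    rw [h6]
    nlinarith
  nlinarith [abs_le.mp h2, h4, key, h1, h3, h5, hτγ, hε1.le]
end

section
/- Let U ∈ ℝ^{n×d} be (α, β)-conditioned with ‖U‖₁ > 0, let τ ∈ [1/2, 1), and fix y ∈ ℝ^d. Define, for s > 0, probabilities p_i ≥ min{1, s·‖U_{(i)}‖₁/‖U‖₁}, and let S be the random diagonal matrix with S_{ii} = 1/p_i with probability p_i and 0 otherwise, independently. Then E[ρ_τ(SUy)] = ρ_τ(Uy), and Var[ρ_τ(SUy)] ≤ (1/s)·(τ/(1−τ))·αβ·ρ_τ(Uy)². -/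
open Matrix MeasureTheory ProbabilityTheory BigOperators

lemma rho_nonneg {τ z : ℝ} (h1 : 0 ≤ τ) (h2 : τ ≤ 1) : 0 ≤ rho τ z := by
  unfold rho; split <;> nlinarith

lemma rho_mul {τ c z : ℝ} (hc : 0 ≤ c) : rho τ (c * z) = c * rho τ z := by
  rcases hc.eq_or_lt with h | h
  · simp [rho, ← h]
  · unfold rho
    rcases le_or_gt 0 z with hz | hz
    · rw [if_pos hz, if_pos (by positivity)]; ring
    · rw [if_neg (by nlinarith), if_neg (by linarith)]; ring

lemma rho_le {τ z : ℝ} (h1 : 1/2 ≤ τ) : rho τ z ≤ τ * |z| := by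
  unfold rho; split
  · rw [abs_of_nonneg ‹_›]
  · rw [abs_of_neg (by linarith)]; nlinarith

lemma le_rho {τ z : ℝ} (h1 : 1/2 ≤ τ) : (1 - τ) * |z| ≤ rho τ z := by
  unfold rho; split
  · rw [abs_of_nonneg ‹_›]; nlinarith
  · rw [abs_of_neg (by linarith)]; nlinarith

set_option maxHeartbeats 1000000 in
theorem sampling_mean_variance {Ω : Type*} [MeasurableSpace Ω]
    (μ : Measure Ω) [IsProbabilityMeasure μ] {n d : ℕ}
    (U : Matrix (Fin n) (Fin d) ℝ) (α β τ s : ℝ) (y : Fin d → ℝ)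
    (hτ : 1/2 ≤ τ ∧ τ < 1)
    (hα : l1M U ≤ α)
    (hβ : ∀ x : Fin d → ℝ, linf x ≤ β * l1 (U.mulVec x))
    (hU : 0 < l1M U) (hs : 0 < s)
    (p : Fin n → ℝ)
    (hp : ∀ i, min 1 (s * (∑ j, |U i j|) / l1M U) ≤ p i ∧ 0 < p i ∧ p i ≤ 1)
    (D : Fin n → Ω → ℝ)
    (hmeas : ∀ i, Measurable (D i))
    (hindep : iIndepFun D μ)
    (hval : ∀ i, ∀ᵐ ω ∂μ, D i ω = 1 / p i ∨ D i ω = 0)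
    (hprob : ∀ i, μ {ω | D i ω = 1 / p i} = ENNReal.ofReal (p i)) :
    (∫ ω, rhoV τ (fun i => D i ω * U.mulVec y i) ∂μ) = rhoV τ (U.mulVec y) ∧
    (∫ ω, (rhoV τ (fun i => D i ω * U.mulVec y i) - rhoV τ (U.mulVec y))^2 ∂μ) ≤
      (1/s) * (τ / (1 - τ)) * (α * β) * (rhoV τ (U.mulVec y))^2 := by
  obtain ⟨hτ1, hτ2⟩ := hτ
  set v : Fin n → ℝ := U.mulVec y with hv
  set a : Fin n → ℝ := fun i => rho τ (v i) with ha
  have hp0 : ∀ i, 0 < p i := fun i => (hp i).2.1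
  have ha0 : ∀ i, 0 ≤ a i := fun i => rho_nonneg (by linarith) (by linarith)
  have hT : rhoV τ v = ∑ i, a i := rfl
  set T : ℝ := ∑ i, a i with hTdef
  have hT0 : 0 ≤ T := Finset.sum_nonneg fun i _ => ha0 i
  -- measurability of the atom sets
  set A : Fin n → Set Ω := fun i => {ω | D i ω = 1 / p i} with hA
  have hAmeas : ∀ i, MeasurableSet (A i) := fun i => (hmeas i) (measurableSet_singleton _)
  have hAprob : ∀ i, (μ (A i)).toReal = p i := by
    intro i; rw [hprob i, ENNReal.toReal_ofReal (hp0 i).le]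
  -- D i is a.e. equal to an indicator
  have hDeq : ∀ i, D i =ᵐ[μ] (A i).indicator (fun _ => 1 / p i) := by
    intro i
    filter_upwards [hval i] with ω hω
    rcases hω with h | h
    · rw [Set.indicator_of_mem (by exact h) , h]
    · rw [Set.indicator_of_notMem, h]
      simp only [A, Set.mem_setOf_eq, h]
      exact fun hc => (one_div_ne_zero (hp0 i).ne').symm hc
  have hD2eq : ∀ i, (fun ω => (D i ω)^2) =ᵐ[μ] (A i).indicator (fun _ => (1 / p i)^2) := by
    intro i
    filter_upwards [hval i] with ω hω
    rcases hω with h | h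
    · rw [Set.indicator_of_mem (by exact h), h]
    · rw [Set.indicator_of_notMem, h]; · ring
      simp only [A, Set.mem_setOf_eq, h]
      exact fun hc => (one_div_ne_zero (hp0 i).ne').symm hc
  have hDint : ∀ i, Integrable (D i) μ := by
    intro i
    exact (integrable_indicator_iff (hAmeas i)).2
      (integrableOn_const (measure_ne_top μ _)) |>.congr (hDeq i).symm
  have hD2int : ∀ i, Integrable (fun ω => (D i ω)^2) μ := by
    intro i
    exact (integrable_indicator_iff (hAmeas i)).2
      (integrableOn_const (measure_ne_top μ _)) |>.congr (hD2eq i).symm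
  have hED : ∀ i, ∫ ω, D i ω ∂μ = 1 := by
    intro i
    rw [integral_congr_ae (hDeq i), integral_indicator_const _ (hAmeas i), smul_eq_mul,
      measureReal_def, hAprob i]
    rw [mul_one_div, div_self (hp0 i).ne']
  have hED2 : ∀ i, ∫ ω, (D i ω)^2 ∂μ = 1 / p i := by
    intro i
    rw [integral_congr_ae (hD2eq i), integral_indicator_const _ (hAmeas i), smul_eq_mul,
      measureReal_def, hAprob i]
    have hne := (hp0 i).ne'
    field_simp
  -- a.e. rewriting of rhoV applied to the scaled vector
  have hXae : (fun ω => rhoV τ (fun i => D i ω * v i)) =ᵐ[μ] (fun ω => ∑ i, D i ω * a i) := by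
    have h' : ∀ᵐ ω ∂μ, ∀ i, D i ω = 1 / p i ∨ D i ω = 0 := (ae_all_iff).2 hval
    filter_upwards [h'] with ω hω
    unfold rhoV
    refine Finset.sum_congr rfl fun i _ => ?_
    have hDnn : 0 ≤ D i ω := by
      rcases hω i with h | h
      · rw [h]; exact le_of_lt (one_div_pos.2 (hp0 i))
      · rw [h]
    exact rho_mul hDnn
  have hmean : (∫ ω, rhoV τ (fun i => D i ω * v i) ∂μ) = T := by
    rw [integral_congr_ae hXae, integral_finset_sum _ (fun i _ => (hDint i).mul_const (a i))]
    simp only [integral_mul_const, hED, one_mul]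
    exact hTdef.symm
  constructor
  · rw [hmean, hT]
  -- Variance part
  have hdiff : (fun ω => (rhoV τ (fun i => D i ω * v i) - rhoV τ v)^2)
      =ᵐ[μ] (fun ω => (∑ i, (D i ω - 1) * a i)^2) := by
    filter_upwards [hXae] with ω hω
    rw [hω, hT, hTdef]
    congr 1
    rw [← Finset.sum_sub_distrib]
    exact Finset.sum_congr rfl fun i _ => by ring
  have hDm1int : ∀ i, Integrable (fun ω => D i ω - 1) μ := fun i =>
    (hDint i).sub (integrable_const 1)
  have hprodint : ∀ i j, Integrable (fun ω => (D i ω - 1) * (D j ω - 1)) μ := by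
    intro i j
    rcases eq_or_ne i j with rfl | hij
    · have : (fun ω => (D i ω - 1) * (D i ω - 1))
          = fun ω => (D i ω)^2 - 2 * D i ω + 1 := by funext ω; ring
      rw [this]
      exact ((hD2int i).sub ((hDint i).const_mul 2)).add (integrable_const 1)
    · exact ((hindep.indepFun hij).comp (measurable_id.sub_const 1)
        (measurable_id.sub_const 1)).integrable_mul (hDm1int i) (hDm1int j)
  have hEij : ∀ i j, (∫ ω, (D i ω - 1) * (D j ω - 1) ∂μ) =
      if i = j then 1 / p i - 1 else 0 := by
    intro i j
    rcases eq_or_ne i j with rfl | hij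
    · rw [if_pos rfl]
      have h1 : (fun ω => (D i ω - 1) * (D i ω - 1))
          = fun ω => (D i ω)^2 - 2 * D i ω + 1 := by funext ω; ring
      have hsub : Integrable (fun ω => (D i ω)^2 - 2 * D i ω) μ :=
        (hD2int i).sub ((hDint i).const_mul 2)
      rw [h1, integral_add hsub (integrable_const 1),
        integral_sub (hD2int i) ((hDint i).const_mul 2), MeasureTheory.integral_const_mul,
        hED, hED2]
      simp only [integral_const, measure_univ, ENNReal.toReal_one, probReal_univ, smul_eq_mul, mul_one,
        one_smul]
      ring
    · rw [if_neg hij]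
      have hind : IndepFun (fun ω => D i ω - 1) (fun ω => D j ω - 1) μ :=
        (hindep.indepFun hij).comp (measurable_id.sub_const 1) (measurable_id.sub_const 1)
      have hz : ∫ ω, (D i ω - 1) ∂μ = 0 := by
        rw [integral_sub (hDint i) (integrable_const 1), hED]; simp
      have hEmul : integral μ ((fun ω => D i ω - 1) * fun ω => D j ω - 1) = 0 := by
        rw [hind.integral_mul_eq_mul_integral (hDm1int i).aestronglyMeasurable (hDm1int j).aestronglyMeasurable, hz, zero_mul]
      exact hEmul
  have hvar : (∫ ω, (rhoV τ (fun i => D i ω * v i) - rhoV τ v)^2 ∂μ)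
      = ∑ i, (1 / p i - 1) * (a i)^2 := by
    rw [integral_congr_ae hdiff]
    have hsq : ∀ ω : Ω, (∑ i, (D i ω - 1) * a i)^2
        = ∑ i, ∑ j, ((D i ω - 1) * (D j ω - 1)) * (a i * a j) := by
      intro ω
      rw [sq, Finset.sum_mul_sum]
      exact Finset.sum_congr rfl fun i _ => Finset.sum_congr rfl fun j _ => by ring
    simp_rw [hsq]
    rw [integral_finset_sum _ (fun i _ => integrable_finset_sum _
      (fun j _ => (hprodint i j).mul_const _))]
    have : ∀ i, (∫ ω, ∑ j, ((D i ω - 1) * (D j ω - 1)) * (a i * a j) ∂μ)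
        = (1 / p i - 1) * (a i)^2 := by
      intro i
      rw [integral_finset_sum _ (fun j _ => (hprodint i j).mul_const _)]
      have h2 : ∀ j, (∫ ω, ((D i ω - 1) * (D j ω - 1)) * (a i * a j) ∂μ)
          = (if i = j then 1 / p i - 1 else 0) * (a i * a j) := by
        intro j; rw [integral_mul_const, hEij]
      simp_rw [h2, ite_mul, zero_mul]
      rw [Finset.sum_ite_eq (Finset.univ) i (fun j => (1 / p i - 1) * (a i * a j))]
      simp only [Finset.mem_univ, if_true]
      ring
    simp_rw [this]
  rw [hvar, hT]
  -- Deterministic inequality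
  -- β is positive
  have hβ0 : 0 ≤ β := by
    by_contra hneg
    push_neg at hneg
    obtain ⟨i, j, hij⟩ : ∃ i j, U i j ≠ 0 := by
      by_contra hz
      push_neg at hz
      have : l1M U = 0 := by unfold l1M; simp [hz]
      linarith
    have h1 : (1:ℝ) ≤ linf (Pi.single j 1) := by
      unfold linf
      have := le_ciSup (f := fun k => |Pi.single j (1:ℝ) k|) (Finite.bddAbove_range _) j
      simpa using this
    have h2 : l1 (U.mulVec (Pi.single j 1)) ≥ 0 := Finset.sum_nonneg fun _ _ => abs_nonneg _
    nlinarith [hβ (Pi.single j 1)]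
  have hl1v : (1 - τ) * l1 v ≤ T := by
    unfold l1
    rw [Finset.mul_sum]
    exact Finset.sum_le_sum fun i _ => le_rho hτ1
  have hl1v0 : 0 ≤ l1 v := Finset.sum_nonneg fun _ _ => abs_nonneg _
  have hai : ∀ i, a i ≤ τ * (∑ j, |U i j|) * (β * l1 v) := by
    intro i
    have h1 : a i ≤ τ * |v i| := rho_le hτ1
    have h2 : |v i| ≤ (∑ j, |U i j|) * linf y := by
      have hvi : v i = ∑ j, U i j * y j := by
        rw [hv]; simp [Matrix.mulVec, dotProduct]
      calc |v i| = |∑ j, U i j * y j| := by rw [hvi]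
        _ ≤ ∑ j, |U i j * y j| := Finset.abs_sum_le_sum_abs _ _
        _ ≤ ∑ j, |U i j| * linf y := by
            refine Finset.sum_le_sum fun j _ => ?_
            rw [abs_mul]
            refine mul_le_mul_of_nonneg_left ?_ (abs_nonneg _)
            have : |y j| ≤ ⨆ k, |y k| :=
              le_ciSup (f := fun k => |y k|) (Finite.bddAbove_range _) j
            exact this
        _ = (∑ j, |U i j|) * linf y := by rw [Finset.sum_mul]
    have h3 : linf y ≤ β * l1 v := hβ y
    have hu0 : 0 ≤ ∑ j, |U i j| := Finset.sum_nonneg fun _ _ => abs_nonneg _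
    calc a i ≤ τ * |v i| := h1
      _ ≤ τ * ((∑ j, |U i j|) * linf y) :=
          mul_le_mul_of_nonneg_left h2 (by linarith)
      _ ≤ τ * ((∑ j, |U i j|) * (β * l1 v)) := by
          refine mul_le_mul_of_nonneg_left (mul_le_mul_of_nonneg_left h3 hu0) (by linarith)
      _ = τ * (∑ j, |U i j|) * (β * l1 v) := by ring
  set K : ℝ := (1/s) * (τ / (1 - τ)) * β * (l1M U) * T with hK
  have hK0 : 0 ≤ K := by
    have : (0:ℝ) ≤ τ / (1 - τ) := div_nonneg (by linarith) (by linarith)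
    have hL0 : 0 ≤ l1M U := hU.le
    positivity
  have hkey : ∀ i, (1 / p i - 1) * (a i)^2 ≤ K * a i := by
    intro i
    set u : ℝ := ∑ j, |U i j| with hu
    have hu0 : 0 ≤ u := Finset.sum_nonneg fun _ _ => abs_nonneg _
    rcases ((hp i).2.2).lt_or_eq with hlt | heq
    · -- p i < 1
      have hmin : s * u / l1M U ≤ p i := by
        rcases le_or_gt 1 (s * u / l1M U) with h | h
        · exfalso
          have := (hp i).1
          rw [min_eq_left h] at this
          linarith
        · have := (hp i).1
          rwa [min_eq_right h.le] at this
      rcases hu0.eq_or_lt with hu00 | hupos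
      · -- zero row: a i = 0
        have hrow : ∀ j, U i j = 0 := by
          intro j
          have := Finset.sum_eq_zero_iff_of_nonneg (fun j _ => abs_nonneg (U i j)) |>.1 hu00.symm
          exact abs_eq_zero.1 (this j (Finset.mem_univ j))
        have hvi : v i = 0 := by
          rw [hv]; show ∑ j, U i j * y j = 0
          exact Finset.sum_eq_zero fun j _ => by rw [hrow j, zero_mul]
        have hai0 : a i = 0 := by rw [ha]; simp [hvi, rho]
        rw [hai0, mul_zero]
        have : ((1:ℝ) / p i - 1) * (0:ℝ)^2 = 0 := by ring
        rw [this]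
      · -- u > 0
        have hpinv : 1 / p i ≤ l1M U / (s * u) := by
          rw [div_le_div_iff₀ (hp0 i) (by positivity)]
          calc 1 * (s * u) = s * u := one_mul _
            _ ≤ p i * l1M U := by
                have := (div_le_iff₀ hU).1 hmin
                nlinarith
            _ = l1M U * p i := mul_comm _ _
        have hstep : a i ≤ τ * u * (β * l1 v) := hai i
        have hb : (1 / p i - 1) * (a i)^2 ≤ (l1M U / (s * u)) * (a i)^2 := by
          have : (1 / p i - 1) ≤ l1M U / (s * u) := by linarith
          nlinarith [sq_nonneg (a i)]
        have hc : (l1M U / (s * u)) * (a i)^2 ≤ (l1M U / (s * u)) * (τ * u * (β * l1 v)) * a i := by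
          have hf : 0 ≤ l1M U / (s * u) := by positivity
          have haa : (a i)^2 ≤ (τ * u * (β * l1 v)) * a i := by nlinarith [hstep, ha0 i]
          calc (l1M U / (s * u)) * (a i)^2
              ≤ (l1M U / (s * u)) * ((τ * u * (β * l1 v)) * a i) :=
                mul_le_mul_of_nonneg_left haa hf
            _ = (l1M U / (s * u)) * (τ * u * (β * l1 v)) * a i := by ring
        have hd : (l1M U / (s * u)) * (τ * u * (β * l1 v)) * a i ≤ K * a i := by
          refine mul_le_mul_of_nonneg_right ?_ (ha0 i)
          have he : (l1M U / (s * u)) * (τ * u * (β * l1 v))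
              = (1/s) * τ * β * l1M U * l1 v := by
            field_simp
          rw [he, hK]
          have hlv : l1 v ≤ T / (1 - τ) := by
            rw [le_div_iff₀ (by linarith)]
            linarith [hl1v]
          calc (1/s) * τ * β * l1M U * l1 v
              ≤ (1/s) * τ * β * l1M U * (T / (1 - τ)) := by
                refine mul_le_mul_of_nonneg_left hlv ?_
                have hτ0 : (0:ℝ) ≤ τ := by linarith
                exact mul_nonneg (mul_nonneg (mul_nonneg (by positivity) hτ0) hβ0) hU.le
            _ = 1/s * (τ / (1 - τ)) * β * l1M U * T := by
                ring
        exact hb.trans (hc.trans hd)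
      -- end u > 0
    · -- p i = 1
      rw [heq]
      simp only [div_one, sub_self, zero_mul]
      exact mul_nonneg hK0 (ha0 i)
  calc ∑ i, (1 / p i - 1) * (a i)^2 ≤ ∑ i, K * a i := Finset.sum_le_sum fun i _ => hkey i
    _ = K * T := by rw [← Finset.mul_sum]
    _ ≤ (1/s) * (τ / (1 - τ)) * (α * β) * T^2 := by
        have hτd : (0:ℝ) ≤ τ / (1 - τ) := div_nonneg (by linarith) (by linarith)
        have h1 : (0:ℝ) ≤ (1/s) * (τ / (1 - τ)) * β * T * T :=
          mul_nonneg (mul_nonneg (mul_nonneg (mul_nonneg (by positivity) hτd) hβ0) hT0) hT0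
        have h2 : K * T = ((1/s) * (τ / (1 - τ)) * β * T * T) * l1M U := by rw [hK]; ring
        rw [h2, sq]
        calc ((1/s) * (τ / (1 - τ)) * β * T * T) * l1M U
            ≤ ((1/s) * (τ / (1 - τ)) * β * T * T) * α := mul_le_mul_of_nonneg_left hα h1
          _ = (1/s) * (τ / (1 - τ)) * (α * β) * (T * T) := by ring
end
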